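/- The parking reflection Φ_{m,n} is an involution on the set PF(m,n) of classical (m,n)-parking functions, and it preserves the traverse path length of each car: for every f ∈ PF(m,n) and every car c, the number of spots car c traverses before parking in Φ_{m,n}(f) equals the number it traverses in f. -/

import Mathlib

/-- Sequentially assign to each car (with the given preference list) the first
unoccupied spot `≥` its preference within `[1,n]`, recording `0` on failure. -/
def spotsAux (n : ℕ) : List ℕ → Finset ℕ → List ℕ
  | [], _ => []
  | p :: rest, occ =>
    let s := ((List.range' p (n + 1 - p)).find? (fun x => decide (x ∉ occ))).getD 0
    s :: spotsAux n rest (insert s occ)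

/-- The spot where car `c` parks (or `0` if it fails to park). -/
def spotOf (n : ℕ) {m : ℕ} (a : Fin m → ℕ) (c : Fin m) : ℕ :=
  (spotsAux n (List.ofFn a) ∅).getD c 0

/-- `a` is a classical `(m,n)`-parking function: all preferences lie in `[1,n]`
and every car succeeds in parking. -/
def IsPF (m n : ℕ) (a : Fin m → ℕ) : Prop :=
  (∀ c, 1 ≤ a c ∧ a c ≤ n) ∧ ∀ c, spotOf n a c ≠ 0

/-- Two vertices are related when some car's traverse path (the interval from
its preference to its parking spot) contains both. -/
def tpathStep (n : ℕ) {m : ℕ} (a : Fin m → ℕ) (u v : ℕ) : Prop :=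
  ∃ c : Fin m, u ∈ Finset.Icc (a c) (spotOf n a c) ∧ v ∈ Finset.Icc (a c) (spotOf n a c)

/-- The parking component of vertex `v`: all vertices connected to `v` by a
chain of pairwise-overlapping traverse paths. -/
def component (n : ℕ) {m : ℕ} (a : Fin m → ℕ) (v : ℕ) : Set ℕ :=
  {u | Relation.EqvGen (tpathStep n a) u v}

/-- The left endpoint of the parking component of `v`. -/
noncomputable def compLeft (n : ℕ) {m : ℕ} (a : Fin m → ℕ) (v : ℕ) : ℕ :=
  sInf (component n a v)

/-- The right endpoint of the parking component of `v`. -/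
noncomputable def compRight (n : ℕ) {m : ℕ} (a : Fin m → ℕ) (v : ℕ) : ℕ :=
  sSup (component n a v)

/-- The parking reflection `Φ_{m,n}`: the parking component
`(i, …, i+j)` of a preferred vertex is reflected about the center of the street
to `(n-i-j+1, …, n-i+1)`, a preference `i+a'` becoming `n-i-j+a'+1`. -/
noncomputable def Phi (m n : ℕ) (a : Fin m → ℕ) : Fin m → ℕ :=
  fun c => n + 1 - compRight n a (a c) + (a c - compLeft n a (a c))

lemma find?_range'_eq_some (pred : ℕ → Bool) :
    ∀ (k p s : ℕ), ((List.range' p k).find? pred = some s ↔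
      (p ≤ s ∧ s < p + k ∧ pred s = true ∧ ∀ q, p ≤ q → q < s → pred q = false)) := by
  intro k
  induction k with
  | zero => intro p s; simp; omega
  | succ k ih =>
    intro p s
    rw [List.range'_succ, List.find?_cons]
    cases hp : pred p with
    | true =>
      simp only []
      constructor
      · rintro h; injection h with h; subst h
        exact ⟨le_refl _, by omega, hp, fun q h1 h2 => absurd h2 (by omega)⟩
      · rintro ⟨h1, h2, h3, h4⟩
        rcases eq_or_lt_of_le h1 with rfl | hlt
        · rfl
        · exact absurd hp (by rw [h4 p (le_refl p) hlt]; simp)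
    | false =>
      simp only []
      rw [ih (p+1)]
      constructor
      · rintro ⟨h1, h2, h3, h4⟩
        refine ⟨by omega, by omega, h3, fun q hq1 hq2 => ?_⟩
        rcases eq_or_lt_of_le hq1 with rfl | h
        · exact hp
        · exact h4 q h hq2
      · rintro ⟨h1, h2, h3, h4⟩
        have hps : p ≠ s := by rintro rfl; rw [hp] at h3; exact absurd h3 (by simp)
        exact ⟨by omega, by omega, h3, fun q hq1 hq2 => h4 q (by omega) hq2⟩

lemma spotsAux_length (n : ℕ) : ∀ (l : List ℕ) (occ : Finset ℕ), (spotsAux n l occ).length = l.length := by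
  intro l
  induction l with
  | nil => intro occ; simp [spotsAux]
  | cons p rest ih => intro occ; simp [spotsAux, ih]

lemma spotsAux_forall₂ (n : ℕ) (P : ℕ → ℕ → Prop)
    (hP : ∀ (p : ℕ) (occ : Finset ℕ),
      P p (((List.range' p (n + 1 - p)).find? (fun x => decide (x ∉ occ))).getD 0)) :
    ∀ (l : List ℕ) (occ : Finset ℕ), List.Forall₂ P l (spotsAux n l occ) := by
  intro l
  induction l with
  | nil => intro occ; simp [spotsAux]
  | cons p rest ih =>
    intro occ
    simp only [spotsAux]
    exact List.Forall₂.cons (hP p occ) (ih _)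

lemma spot_step_bounds (n p : ℕ) (occ : Finset ℕ)
    (h : ((List.range' p (n + 1 - p)).find? (fun x => decide (x ∉ occ))).getD 0 ≠ 0) :
    p ≤ ((List.range' p (n + 1 - p)).find? (fun x => decide (x ∉ occ))).getD 0 ∧
      ((List.range' p (n + 1 - p)).find? (fun x => decide (x ∉ occ))).getD 0 ≤ n := by
  cases hf : (List.range' p (n + 1 - p)).find? (fun x => decide (x ∉ occ)) with
  | none => rw [hf] at h; simp at h
  | some s =>
    have := (find?_range'_eq_some _ _ _ _).mp hf
    simp only [Option.getD_some]
    omega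





section Comp

variable {m n : ℕ} {a : Fin m → ℕ}

lemma mem_component_self (v : ℕ) : v ∈ component n a v := Relation.EqvGen.refl v

lemma component_eq_of_mem {u v : ℕ} (h : u ∈ component n a v) :
    component n a u = component n a v := by
  ext x
  exact ⟨fun hx => Relation.EqvGen.trans x u v hx h,
    fun hx => Relation.EqvGen.trans x v u hx (Relation.EqvGen.symm u v h)⟩

lemma compLeft_eq_of_mem {u v : ℕ} (h : u ∈ component n a v) :
    compLeft n a u = compLeft n a v := by
  unfold compLeft; rw [component_eq_of_mem h]

lemma compRight_eq_of_mem {u v : ℕ} (h : u ∈ component n a v) :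
    compRight n a u = compRight n a v := by
  unfold compRight; rw [component_eq_of_mem h]

lemma eqv_between {u w : ℕ} (h : Relation.EqvGen (tpathStep n a) u w) :
    ∀ t, (u ≤ t ∧ t ≤ w) ∨ (w ≤ t ∧ t ≤ u) →
      Relation.EqvGen (tpathStep n a) t u ∧ Relation.EqvGen (tpathStep n a) t w := by
  induction h with
  | rel u w hr =>
    intro t ht
    obtain ⟨c, hu, hw⟩ := hr
    rw [Finset.mem_Icc] at hu hw
    have htc : t ∈ Finset.Icc (a c) (spotOf n a c) := by rw [Finset.mem_Icc]; omega
    exact ⟨Relation.EqvGen.rel _ _ ⟨c, htc, by rw [Finset.mem_Icc]; omega⟩,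
      Relation.EqvGen.rel _ _ ⟨c, htc, by rw [Finset.mem_Icc]; omega⟩⟩
  | refl u =>
    intro t ht
    have : t = u := by omega
    subst this
    exact ⟨Relation.EqvGen.refl t, Relation.EqvGen.refl t⟩
  | symm u w _ ih =>
    intro t ht
    have := ih t (by omega)
    exact ⟨this.2, this.1⟩
  | trans u x w h1 h2 ih1 ih2 =>
    intro t ht
    rcases (by omega : (u ≤ t ∧ t ≤ x) ∨ (x ≤ t ∧ t ≤ u) ∨ (x ≤ t ∧ t ≤ w) ∨ (w ≤ t ∧ t ≤ x)) with
      h | h | h | h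
    · obtain ⟨h1', h2'⟩ := ih1 t (Or.inl h)
      exact ⟨h1', Relation.EqvGen.trans _ _ _ h2' h2⟩
    · obtain ⟨h1', h2'⟩ := ih1 t (Or.inr h)
      exact ⟨h1', Relation.EqvGen.trans _ _ _ h2' h2⟩
    · obtain ⟨h1', h2'⟩ := ih2 t (Or.inl h)
      exact ⟨Relation.EqvGen.trans _ _ _ h1' (Relation.EqvGen.symm _ _ h1), h2'⟩
    · obtain ⟨h1', h2'⟩ := ih2 t (Or.inr h)
      exact ⟨Relation.EqvGen.trans _ _ _ h1' (Relation.EqvGen.symm _ _ h1), h2'⟩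

lemma forall₂_apply {P : ℕ → ℕ → Prop}
    (h : List.Forall₂ P (List.ofFn a) (spotsAux n (List.ofFn a) ∅)) (c : Fin m) :
    P (a c) (spotOf n a c) := by
  rw [List.forall₂_iff_get] at h
  have hc : (c : ℕ) < (spotsAux n (List.ofFn a) ∅).length := by
    rw [spotsAux_length]; simpa using c.isLt
  have h2 := h.2 c (by simpa using c.isLt) hc
  have hspot : spotOf n a c = (spotsAux n (List.ofFn a) ∅).get ⟨c, hc⟩ := by
    unfold spotOf
    rw [List.getD_eq_getElem _ _ hc, List.get_eq_getElem]
  rw [List.get_ofFn] at h2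
  rw [hspot]
  convert h2 using 2
  rfl

lemma spot_bounds (ha : IsPF m n a) (c : Fin m) :
    a c ≤ spotOf n a c ∧ spotOf n a c ≤ n := by
  have := forall₂_apply (spotsAux_forall₂ n (fun p s => s ≠ 0 → p ≤ s ∧ s ≤ n)
    (fun p occ h => spot_step_bounds n p occ h) (List.ofFn a) ∅) c
  exact this (ha.2 c)

lemma eqv_mem_Icc (ha : IsPF m n a) {u w : ℕ} (h : Relation.EqvGen (tpathStep n a) u w) :
    (1 ≤ u ∧ u ≤ n) ↔ (1 ≤ w ∧ w ≤ n) := by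
  induction h with
  | rel u w hr =>
    obtain ⟨c, hu, hw⟩ := hr
    rw [Finset.mem_Icc] at hu hw
    have h1 := (ha.1 c).1
    have h2 := (spot_bounds ha c).2
    constructor <;> intro <;> omega
  | refl u => rfl
  | symm u w _ ih => exact ih.symm
  | trans u x w _ _ ih1 ih2 => exact ih1.trans ih2

lemma component_subset (ha : IsPF m n a) {v : ℕ} (hv : 1 ≤ v ∧ v ≤ n) :
    ∀ u ∈ component n a v, 1 ≤ u ∧ u ≤ n :=
  fun _ hu => (eqv_mem_Icc ha hu).mpr hv

lemma comp_bounds (ha : IsPF m n a) {v : ℕ} (hv : 1 ≤ v ∧ v ≤ n) :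
    1 ≤ compLeft n a v ∧ compLeft n a v ≤ v ∧ v ≤ compRight n a v ∧ compRight n a v ≤ n := by
  have hne : (component n a v).Nonempty := ⟨v, mem_component_self v⟩
  have hbdd : BddAbove (component n a v) := ⟨n, fun u hu => (component_subset ha hv u hu).2⟩
  have hL := Nat.sInf_mem hne
  have hR := Nat.sSup_mem hne hbdd
  exact ⟨(component_subset ha hv _ hL).1, Nat.sInf_le (mem_component_self v),
    le_csSup hbdd (mem_component_self v), (component_subset ha hv _ hR).2⟩

lemma component_eq_Icc (ha : IsPF m n a) {v : ℕ} (hv : 1 ≤ v ∧ v ≤ n) :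
    component n a v = Set.Icc (compLeft n a v) (compRight n a v) := by
  have hne : (component n a v).Nonempty := ⟨v, mem_component_self v⟩
  have hbdd : BddAbove (component n a v) := ⟨n, fun u hu => (component_subset ha hv u hu).2⟩
  have hL := Nat.sInf_mem hne
  have hR := Nat.sSup_mem hne hbdd
  apply Set.Subset.antisymm
  · intro u hu
    exact ⟨Nat.sInf_le hu, le_csSup hbdd hu⟩
  · intro t ht
    obtain ⟨ht1, ht2⟩ := ht
    have hLR : Relation.EqvGen (tpathStep n a) (compLeft n a v) (compRight n a v) :=
      Relation.EqvGen.trans _ _ _ hL (Relation.EqvGen.symm _ _ hR)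
    obtain ⟨h1, _⟩ := eqv_between hLR t (Or.inl ⟨ht1, ht2⟩)
    exact Relation.EqvGen.trans _ _ _ h1 hL

end Comp

noncomputable def rho (n : ℕ) {m : ℕ} (a : Fin m → ℕ) (x : ℕ) : ℕ :=
  n + 1 - compRight n a x + (x - compLeft n a x)

section Rho
variable {m n : ℕ} {a : Fin m → ℕ}

lemma rho_eq_of_mem {v q : ℕ} (hq : q ∈ component n a v) :
    rho n a q = n + 1 - compRight n a v + (q - compLeft n a v) := by
  unfold rho
  rw [compLeft_eq_of_mem hq, compRight_eq_of_mem hq]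

lemma rho_bounds (ha : IsPF m n a) {x : ℕ} (hx : 1 ≤ x ∧ x ≤ n) :
    1 ≤ rho n a x ∧ rho n a x ≤ n := by
  have hb := comp_bounds ha hx
  unfold rho; omega

lemma mem_comp_bounds (ha : IsPF m n a) {v q : ℕ} (hv : 1 ≤ v ∧ v ≤ n)
    (hq : q ∈ component n a v) : compLeft n a v ≤ q ∧ q ≤ compRight n a v := by
  rw [component_eq_Icc ha hv] at hq; exact hq

lemma comp_disjoint (ha : IsPF m n a) {x y : ℕ} (hx : 1 ≤ x ∧ x ≤ n) (hy : 1 ≤ y ∧ y ≤ n)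
    (hmem : y ∉ component n a x) :
    compRight n a x < compLeft n a y ∨ compRight n a y < compLeft n a x := by
  by_contra hcon
  push_neg at hcon
  have hbx := comp_bounds ha hx
  have hby := comp_bounds ha hy
  set z := max (compLeft n a x) (compLeft n a y) with hz
  have hzx : z ∈ component n a x := by
    rw [component_eq_Icc ha hx]; constructor <;> omega
  have hzy : z ∈ component n a y := by
    rw [component_eq_Icc ha hy]; constructor <;> omega
  apply hmem
  rw [← component_eq_of_mem hzx, component_eq_of_mem hzy]
  exact mem_component_self y

lemma rho_inj (ha : IsPF m n a) {x y : ℕ} (hx : 1 ≤ x ∧ x ≤ n) (hy : 1 ≤ y ∧ y ≤ n)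
    (h : rho n a x = rho n a y) : x = y := by
  have hbx := comp_bounds ha hx
  have hby := comp_bounds ha hy
  by_cases hmem : y ∈ component n a x
  · have h1 := rho_eq_of_mem (mem_component_self (n := n) (a := a) x)
    have h2 := rho_eq_of_mem hmem
    have h3 := mem_comp_bounds ha hx hmem
    omega
  · exfalso
    have hd := comp_disjoint ha hx hy hmem
    unfold rho at h
    omega

end Rho

lemma spotsAux_cons (n p : ℕ) (rest : List ℕ) (occ : Finset ℕ) :
    spotsAux n (p :: rest) occ =
      (((List.range' p (n + 1 - p)).find? (fun x => decide (x ∉ occ))).getD 0) ::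
        spotsAux n rest
          (insert (((List.range' p (n + 1 - p)).find? (fun x => decide (x ∉ occ))).getD 0) occ) :=
  rfl

def GoodPair (n : ℕ) {m : ℕ} (a : Fin m → ℕ) (p s : ℕ) : Prop :=
  s ≠ 0 ∧ 1 ≤ p ∧ p ≤ s ∧ s ≤ n ∧ ∀ q, p ≤ q → q ≤ s → rho n a q = rho n a p + (q - p)

section Sim
variable {m n : ℕ} {a : Fin m → ℕ}

lemma sim (ha : IsPF m n a) :
    ∀ (l : List ℕ) (occ : Finset ℕ), (∀ x ∈ occ, 1 ≤ x ∧ x ≤ n) →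
      List.Forall₂ (GoodPair n a) l (spotsAux n l occ) →
      spotsAux n (l.map (rho n a)) (occ.image (rho n a)) = (spotsAux n l occ).map (rho n a) := by
  intro l
  induction l with
  | nil => intro occ _ _; simp [spotsAux]
  | cons p rest ih =>
    intro occ hocc hf
    rw [spotsAux_cons] at hf
    set s := ((List.range' p (n + 1 - p)).find? (fun x => decide (x ∉ occ))).getD 0 with hs
    rcases hf with _ | ⟨hgood, hrest⟩
    obtain ⟨hs0, hp1, hps, hsn, hshift⟩ := hgood
    have hfind : (List.range' p (n + 1 - p)).find? (fun x => decide (x ∉ occ)) = some s := by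
      cases hfe : (List.range' p (n + 1 - p)).find? (fun x => decide (x ∉ occ)) with
      | none => exact absurd (by rw [hs, hfe]; rfl) hs0
      | some x => rw [hs, hfe]; rfl
    obtain ⟨hps', hlt, hpred, hmin⟩ := (find?_range'_eq_some _ _ _ _).mp hfind
    have hsnotocc : s ∉ occ := by simpa using hpred
    have hocc_mem : ∀ q, p ≤ q → q < s → q ∈ occ := fun q h1 h2 => by
      have := hmin q h1 h2; simpa using this
    have hrs := hshift s hps (le_refl s)
    have hrsn := (rho_bounds ha ⟨by omega, hsn⟩).2
    have hfind' : (List.range' (rho n a p) (n + 1 - rho n a p)).find?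
        (fun x => decide (x ∉ occ.image (rho n a))) = some (rho n a s) := by
      rw [find?_range'_eq_some]
      refine ⟨by omega, by omega, ?_, ?_⟩
      · simp only [decide_eq_true_eq]
        intro hmem
        rw [Finset.mem_image] at hmem
        obtain ⟨q, hq, hq2⟩ := hmem
        have := rho_inj ha (hocc q hq) ⟨by omega, hsn⟩ hq2
        exact hsnotocc (this ▸ hq)
      · intro q' h1 h2
        simp only [decide_eq_false_iff_not, not_not]
        refine Finset.mem_image.mpr ⟨p + (q' - rho n a p), hocc_mem _ (by omega) (by omega), ?_⟩
        rw [hshift (p + (q' - rho n a p)) (by omega) (by omega)]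
        omega
    rw [List.map_cons, spotsAux_cons, hfind', spotsAux_cons, ← hs]
    simp only [Option.getD_some, List.map_cons]
    congr 1
    rw [← Finset.image_insert]
    refine ih (insert s occ) ?_ hrest
    intro x hx
    rcases Finset.mem_insert.mp hx with rfl | hx'
    · exact ⟨by omega, hsn⟩
    · exact hocc x hx'

end Sim

section Main
variable {m n : ℕ} {a : Fin m → ℕ}

lemma phi_eq (c : Fin m) : Phi m n a c = rho n a (a c) := rfl

lemma mem_comp_of_path (ha : IsPF m n a) (c : Fin m) {q : ℕ}
    (h1 : a c ≤ q) (h2 : q ≤ spotOf n a c) : q ∈ component n a (a c) :=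
  Relation.EqvGen.rel _ _ ⟨c, Finset.mem_Icc.mpr ⟨h1, h2⟩,
    Finset.mem_Icc.mpr ⟨le_refl _, (spot_bounds ha c).1⟩⟩

lemma forall₂_ofFn {P : ℕ → ℕ → Prop} (h : ∀ c : Fin m, P (a c) (spotOf n a c)) :
    List.Forall₂ P (List.ofFn a) (spotsAux n (List.ofFn a) ∅) := by
  rw [List.forall₂_iff_get]
  refine ⟨by rw [spotsAux_length], fun i h1 h2 => ?_⟩
  have hc : i < m := by simpa using h1
  have hg1 : (List.ofFn a).get ⟨i, h1⟩ = a ⟨i, hc⟩ := by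
    rw [List.get_ofFn]
    congr 1
  have hg2 : (spotsAux n (List.ofFn a) ∅).get ⟨i, h2⟩ = spotOf n a ⟨i, hc⟩ := by
    unfold spotOf
    rw [List.getD_eq_getElem _ _ h2, List.get_eq_getElem]
  rw [hg1, hg2]
  exact h ⟨i, hc⟩

lemma good_run (ha : IsPF m n a) :
    List.Forall₂ (GoodPair n a) (List.ofFn a) (spotsAux n (List.ofFn a) ∅) := by
  refine forall₂_ofFn fun c => ⟨ha.2 c, (ha.1 c).1, (spot_bounds ha c).1,
    (spot_bounds ha c).2, fun q h1 h2 => ?_⟩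
  have hq := mem_comp_of_path ha c h1 h2
  have e1 := rho_eq_of_mem hq
  have e2 := rho_eq_of_mem (mem_component_self (n := n) (a := a) (a c))
  have hb := comp_bounds ha (ha.1 c)
  have hqb := mem_comp_bounds ha (ha.1 c) hq
  omega

lemma spots_phi (ha : IsPF m n a) :
    spotsAux n (List.ofFn (Phi m n a)) ∅ = (spotsAux n (List.ofFn a) ∅).map (rho n a) := by
  have hofn : List.ofFn (Phi m n a) = (List.ofFn a).map (rho n a) := by
    rw [List.map_ofFn]; rfl
  have := sim ha (List.ofFn a) ∅ (by simp) (good_run ha)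
  rw [hofn]
  simpa using this

lemma spotOf_phi (ha : IsPF m n a) (c : Fin m) :
    spotOf n (Phi m n a) c = rho n a (spotOf n a c) := by
  unfold spotOf
  rw [spots_phi ha]
  have hc : (c : ℕ) < (spotsAux n (List.ofFn a) ∅).length := by
    rw [spotsAux_length]; simpa using c.isLt
  rw [List.getD_eq_getElem _ _ (by simpa using hc), List.getElem_map,
    List.getD_eq_getElem _ _ hc]

end Main

section Main2
variable {m n : ℕ} {a : Fin m → ℕ}

lemma eqv_map (ha : IsPF m n a) {u w : ℕ}
    (h : Relation.EqvGen (tpathStep n a) u w) :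
    Relation.EqvGen (tpathStep n (Phi m n a)) (rho n a u) (rho n a w) := by
  induction h with
  | rel u w hr =>
    obtain ⟨c, hu, hw⟩ := hr
    rw [Finset.mem_Icc] at hu hw
    have hcu := mem_comp_of_path ha c hu.1 hu.2
    have hcw := mem_comp_of_path ha c hw.1 hw.2
    have hcs := mem_comp_of_path ha c (spot_bounds ha c).1 (le_refl _)
    have eu := rho_eq_of_mem hcu
    have ew := rho_eq_of_mem hcw
    have es := rho_eq_of_mem hcs
    have e0 := rho_eq_of_mem (mem_component_self (n := n) (a := a) (a c))
    have hb := comp_bounds ha (ha.1 c)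
    have hub := mem_comp_bounds ha (ha.1 c) hcu
    have hwb := mem_comp_bounds ha (ha.1 c) hcw
    have hsb := mem_comp_bounds ha (ha.1 c) hcs
    refine Relation.EqvGen.rel _ _ ⟨c, ?_, ?_⟩ <;>
      rw [Finset.mem_Icc, phi_eq, spotOf_phi ha c] <;> omega
  | refl u => exact Relation.EqvGen.refl _
  | symm u w _ ih => exact Relation.EqvGen.symm _ _ ih
  | trans u x w _ _ ih1 ih2 => exact Relation.EqvGen.trans _ _ _ ih1 ih2

lemma comp_phi (ha : IsPF m n a) (c : Fin m) :
    component n (Phi m n a) (Phi m n a c) =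
      Set.Icc (n + 1 - compRight n a (a c)) (n + 1 - compLeft n a (a c)) := by
  have hv := ha.1 c
  have hb := comp_bounds ha hv
  have e0 := rho_eq_of_mem (mem_component_self (n := n) (a := a) (a c))
  apply Set.Subset.antisymm
  · intro u hu
    have key : ∀ {x y : ℕ}, Relation.EqvGen (tpathStep n (Phi m n a)) x y →
        (x ∈ Set.Icc (n + 1 - compRight n a (a c)) (n + 1 - compLeft n a (a c)) ↔
          y ∈ Set.Icc (n + 1 - compRight n a (a c)) (n + 1 - compLeft n a (a c))) := by
      intro x y h
      induction h with
      | rel x y hr =>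
        obtain ⟨c', hx, hy⟩ := hr
        rw [Finset.mem_Icc, phi_eq, spotOf_phi ha c'] at hx hy
        have hv' := ha.1 c'
        have hb' := comp_bounds ha hv'
        have hcs := mem_comp_of_path ha c' (spot_bounds ha c').1 (le_refl _)
        have e0' := rho_eq_of_mem (mem_component_self (n := n) (a := a) (a c'))
        have esp := rho_eq_of_mem hcs
        have hsb := mem_comp_bounds ha hv' hcs
        by_cases hmem : a c' ∈ component n a (a c)
        · have hL := compLeft_eq_of_mem hmem
          have hR := compRight_eq_of_mem hmem
          simp only [Set.mem_Icc]
          constructor <;> intro <;> omega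
        · have hd := comp_disjoint ha hv hv' hmem
          simp only [Set.mem_Icc]
          constructor <;> intro <;> omega
      | refl x => exact Iff.rfl
      | symm _ _ _ ih => exact ih.symm
      | trans _ _ _ _ _ ih1 ih2 => exact ih1.trans ih2
    refine (key hu).mpr ?_
    rw [Set.mem_Icc, phi_eq]
    omega
  · intro y hy
    rw [Set.mem_Icc] at hy
    have hx : (compLeft n a (a c) + (y - (n + 1 - compRight n a (a c)))) ∈
        component n a (a c) := by
      rw [component_eq_Icc ha hv]
      exact ⟨by omega, by omega⟩
    have e := rho_eq_of_mem hx
    have hry : rho n a (compLeft n a (a c) + (y - (n + 1 - compRight n a (a c)))) = y := by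
      omega
    have h2 := eqv_map ha (hx : Relation.EqvGen (tpathStep n a) _ (a c))
    rw [hry] at h2
    exact h2

lemma nat_sInf_Icc {A B : ℕ} (h : A ≤ B) : sInf (Set.Icc A B) = A := by
  apply le_antisymm (Nat.sInf_le (Set.mem_Icc.mpr ⟨le_refl A, h⟩))
  exact (Nat.sInf_mem (Set.nonempty_of_mem (Set.mem_Icc.mpr ⟨le_refl A, h⟩))).1

lemma nat_sSup_Icc {A B : ℕ} (h : A ≤ B) : sSup (Set.Icc A B) = B := by
  have hbdd : BddAbove (Set.Icc A B) := ⟨B, fun x hx => hx.2⟩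
  apply le_antisymm
  · exact (Nat.sSup_mem (Set.nonempty_of_mem (Set.mem_Icc.mpr ⟨le_refl A, h⟩)) hbdd).2
  · exact le_csSup hbdd (Set.mem_Icc.mpr ⟨h, le_refl B⟩)

end Main2

/-- The parking reflection is an involution on `PF(m,n)` preserving the
traverse path length of every car. -/
theorem phi_involution (m n : ℕ) (hm : 1 ≤ m) (hmn : m ≤ n)
    (a : Fin m → ℕ) (ha : IsPF m n a) :
    IsPF m n (Phi m n a) ∧ Phi m n (Phi m n a) = a ∧
      ∀ c, spotOf n (Phi m n a) c - Phi m n a c = spotOf n a c - a c := by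
  have hpref : ∀ c, 1 ≤ Phi m n a c ∧ Phi m n a c ≤ n := fun c => by
    rw [phi_eq]; exact rho_bounds ha (ha.1 c)
  have hPF' : IsPF m n (Phi m n a) := by
    refine ⟨hpref, fun c => ?_⟩
    rw [spotOf_phi ha c]
    have hs0 := ha.2 c
    have hsb := spot_bounds ha c
    have := rho_bounds ha (x := spotOf n a c) ⟨by omega, hsb.2⟩
    omega
  refine ⟨hPF', ?_, ?_⟩
  · funext c
    have hv := ha.1 c
    have hb := comp_bounds ha hv
    have e0 := rho_eq_of_mem (mem_component_self (n := n) (a := a) (a c))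
    have hcL : compLeft n (Phi m n a) (Phi m n a c) = n + 1 - compRight n a (a c) := by
      unfold compLeft
      rw [comp_phi ha c]
      exact nat_sInf_Icc (by omega)
    have hcR : compRight n (Phi m n a) (Phi m n a c) = n + 1 - compLeft n a (a c) := by
      unfold compRight
      rw [comp_phi ha c]
      exact nat_sSup_Icc (by omega)
    have hPP : Phi m n (Phi m n a) c =
        n + 1 - compRight n (Phi m n a) (Phi m n a c) +
          (Phi m n a c - compLeft n (Phi m n a) (Phi m n a c)) := rfl
    rw [hPP, hcL, hcR, phi_eq]
    omega
  · intro c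
    rw [spotOf_phi ha c, phi_eq]
    have hs0 := ha.2 c
    have hsb := spot_bounds ha c
    have hcs := mem_comp_of_path ha c hsb.1 (le_refl _)
    have e1 := rho_eq_of_mem hcs
    have e0 := rho_eq_of_mem (mem_component_self (n := n) (a := a) (a c))
    have hb := comp_bounds ha (ha.1 c)
    have hsbc := mem_comp_bounds ha (ha.1 c) hcs
    omega
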